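/- Let κ ∈ ℝ (not zero or a negative integer) and c ∈ ℂ with c ≠ 0 satisfy (2κ/e)(4 sin 1 + 3 − e) ≥ (e+1)|c| + 4(e−1)³ + 6(e−1)² + 6/e − 12/e². Then the function χ(z) = (6κ/c)(1 − u_{κ,c}(z)) belongs to the class K_e of exponential convex functions. -/

import Mathlib

open Complex Metric Set

noncomputable def poch (x : ℂ) (n : ℕ) : ℂ := ∏ k ∈ Finset.range n, (x + k)

/-- The class `P_e`: `p` is analytic on the unit disk, `p 0 = 1`, and `p` maps the
unit disk into `exp(𝔻)` (equivalently, `p` is subordinate to `exp`). -/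
def memPe (p : ℂ → ℂ) : Prop :=
  AnalyticOnNhd ℂ p (Metric.ball 0 1) ∧ p 0 = 1 ∧
    ∀ z ∈ Metric.ball (0:ℂ) 1, p z ∈ Complex.exp '' Metric.ball 0 1

/-- The class `K_e` of exponential convex functions. -/
def memKe (f : ℂ → ℂ) : Prop :=
  AnalyticOnNhd ℂ f (Metric.ball 0 1) ∧ f 0 = 0 ∧ deriv f 0 = 1 ∧
    (∀ z ∈ Metric.ball (0:ℂ) 1, deriv f z ≠ 0) ∧
    memPe (fun z => 1 + z * deriv (deriv f) z / deriv f z)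

/-- The class `S*_e` of exponential starlike functions. -/
def memSe (f : ℂ → ℂ) : Prop :=
  AnalyticOnNhd ℂ f (Metric.ball 0 1) ∧ f 0 = 0 ∧ deriv f 0 = 1 ∧
    (∀ z ∈ Metric.ball (0:ℂ) 1, z ≠ 0 → f z ≠ 0) ∧
    memPe (fun z => if z = 0 then 1 else z * deriv f z / f z)

/-- The normalized generalized Struve function of the first kind
`u_{κ,c}(z) = ∑_{n≥0} ((−c/4)^n / ((3/2)_n (κ)_n)) z^n`. -/
noncomputable def struveU (κ c : ℂ) (z : ℂ) : ℂ :=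
  ∑' n : ℕ, (-c / 4) ^ n / (poch (3/2) n * poch κ n) * z ^ n

lemma poch_ofReal (x : ℝ) (n : ℕ) :
    poch (x : ℂ) n = ((∏ k ∈ Finset.range n, (x + (k:ℝ)) : ℝ) : ℂ) := by
  unfold poch; push_cast; rfl

lemma P_pos (n : ℕ) : 0 < ∏ k ∈ Finset.range n, (3/2 + (k:ℝ)) :=
  Finset.prod_pos (by intros; positivity)

lemma Q_pos {κ : ℝ} (hκ : 0 < κ) (n : ℕ) : 0 < ∏ k ∈ Finset.range n, (κ + (k:ℝ)) :=
  Finset.prod_pos (by intros; positivity)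

lemma Q_ge {κ : ℝ} (hκ : 0 < κ) (n : ℕ) : κ ^ n ≤ ∏ k ∈ Finset.range n, (κ + (k:ℝ)) := by
  calc κ ^ n = ∏ _k ∈ Finset.range n, κ := by rw [Finset.prod_const, Finset.card_range]
  _ ≤ _ := Finset.prod_le_prod (fun i _ => hκ.le)
    (fun i _ => le_add_of_nonneg_right (Nat.cast_nonneg i))

lemma key_ind {t κ : ℝ} (ht : 0 ≤ t) (hκ : 0 < κ) (hq : t ≤ 0.85 * κ) :
    ∀ n : ℕ, 6 * ((n:ℝ)+2) * ((n:ℝ)+1) * t^(n+1) * 5^(n+1)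
      ≤ 4^(n+2) * (∏ k ∈ Finset.range (n+2), (3/2 + (k:ℝ))) * κ^(n+1) := by
  intro n
  induction n with
  | zero => simp [Finset.prod_range_succ]; nlinarith
  | succ n ih =>
      have hn0 : (0:ℝ) ≤ (n:ℝ) := Nat.cast_nonneg n
      rw [show n+1+2 = n+2+1 from rfl, Finset.prod_range_succ]
      set P := ∏ k ∈ Finset.range (n+2), (3/2 + (k:ℝ)) with hPdef
      have hP : 0 < P := P_pos (n+2)
      have hn1 : (0:ℝ) < (n:ℝ)+1 := by positivity
      have hC : 5*t*((n:ℝ)+3) ≤ ((n:ℝ)+1)*(4*(3/2+((n:ℝ)+2))*κ) := by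
        nlinarith [mul_le_mul_of_nonneg_right hq (by positivity : (0:ℝ) ≤ 5*((n:ℝ)+3)),
          mul_nonneg (mul_nonneg hκ.le hn0) hn0, mul_nonneg hκ.le hn0]
      refine le_of_mul_le_mul_right ?_ hn1
      push_cast
      calc 6 * ((n:ℝ)+1+2) * ((n:ℝ)+1+1) * t^(n+1+1) * 5^(n+1+1) * ((n:ℝ)+1)
          = (6 * ((n:ℝ)+2) * ((n:ℝ)+1) * t^(n+1) * 5^(n+1)) * (5*t*((n:ℝ)+3)) := by ring
        _ ≤ (4^(n+2) * P * κ^(n+1)) * (5*t*((n:ℝ)+3)) :=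
            mul_le_mul_of_nonneg_right ih (by positivity)
        _ ≤ (4^(n+2) * P * κ^(n+1)) * (((n:ℝ)+1)*(4*(3/2+((n:ℝ)+2))*κ)) :=
            mul_le_mul_of_nonneg_left hC (by positivity)
        _ = 4^(n+2+1) * (P * (3/2 + ((n:ℝ)+2))) * κ^(n+1+1) * ((n:ℝ)+1) := by ring

noncomputable def bc (κ : ℝ) (c : ℂ) (n : ℕ) : ℂ :=
  (-c/4)^n / (poch (3/2) n * poch (κ:ℂ) n)

noncomputable def Bc (κ : ℝ) (c : ℂ) (n : ℕ) : ℂ := -(6*(κ:ℂ)/c) * bc κ c (n+1)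

lemma norm_bc {κ : ℝ} (hκ : 0 < κ) (c : ℂ) (n : ℕ) :
    ‖bc κ c n‖ = (‖c‖/4)^n /
      ((∏ k ∈ Finset.range n, (3/2 + (k:ℝ))) * (∏ k ∈ Finset.range n, (κ + (k:ℝ)))) := by
  unfold bc
  rw [show ((3:ℂ)/2) = ((3/2:ℝ):ℂ) by norm_num, poch_ofReal, poch_ofReal,
    ← Complex.ofReal_mul]
  rw [norm_div, norm_pow, norm_div, norm_neg, Complex.norm_real]
  rw [Real.norm_eq_abs, abs_of_pos (mul_pos (P_pos n) (Q_pos hκ n))]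
  norm_num

lemma bc_zero (κ : ℝ) (c : ℂ) : bc κ c 0 = 1 := by simp [bc, poch]

lemma Bc_zero {κ : ℝ} (hκ : 0 < κ) {c : ℂ} (hc : c ≠ 0) : Bc κ c 0 = 1 := by
  have hκ' : (κ:ℂ) ≠ 0 := Complex.ofReal_ne_zero.mpr hκ.ne'
  simp only [Bc, bc, poch, zero_add, Finset.prod_range_one]
  push_cast
  field_simp
  rw [add_zero, mul_div_right_comm, mul_div_assoc, div_self hκ']
  norm_num

lemma KB {κ : ℝ} (hκ : 0 < κ) {c : ℂ} (hc : c ≠ 0) (hq : ‖c‖ ≤ 0.85 * κ) (n : ℕ) :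
    ((n:ℝ)+2)*((n:ℝ)+1)*‖Bc κ c (n+1)‖ ≤ (1/5)^(n+1) := by
  set t := ‖c‖ with htdef
  have ht : 0 < t := norm_pos_iff.mpr hc
  set P := ∏ k ∈ Finset.range (n+2), (3/2 + (k:ℝ)) with hPdef
  set Q := ∏ k ∈ Finset.range (n+2), (κ + (k:ℝ)) with hQdef
  have hP : 0 < P := P_pos (n+2)
  have hQ : 0 < Q := Q_pos hκ (n+2)
  have hnormB : ‖Bc κ c (n+1)‖ = 6*κ/t * ((t/4)^(n+2) / (P * Q)) := by
    unfold Bc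
    rw [norm_mul, norm_neg, norm_div, norm_mul, Complex.norm_real, Real.norm_eq_abs,
      abs_of_pos hκ, norm_bc hκ]
    norm_num
    rfl
  have h1 : ‖Bc κ c (n+1)‖ ≤ 6*κ/t * ((t/4)^(n+2) / (P * κ^(n+2))) := by
    rw [hnormB]
    apply mul_le_mul_of_nonneg_left _ (by positivity)
    apply div_le_div_of_nonneg_left (by positivity) (by positivity)
    exact mul_le_mul_of_nonneg_left (Q_ge hκ (n+2)) hP.le
  have h2 : 6*κ/t * ((t/4)^(n+2) / (P * κ^(n+2))) = 6*t^(n+1)/(4^(n+2)*P*κ^(n+1)) := by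
    rw [div_pow]
    field_simp
    ring
  have hk := key_ind ht.le hκ hq n
  calc ((n:ℝ)+2)*((n:ℝ)+1)*‖Bc κ c (n+1)‖
      ≤ ((n:ℝ)+2)*((n:ℝ)+1) * (6*t^(n+1)/(4^(n+2)*P*κ^(n+1))) := by
        rw [← h2]; exact mul_le_mul_of_nonneg_left h1 (by positivity)
    _ ≤ (1/5)^(n+1) := by
        rw [div_pow, one_pow, mul_div_assoc' _ _ (4^(n+2)*P*κ^(n+1)),
          div_le_div_iff₀ (by positivity) (by positivity)]
        nlinarith [hk]

noncomputable def gS (κ : ℝ) (c : ℂ) (z : ℂ) : ℂ := ∑' n : ℕ, Bc κ c n * z^(n+1)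
noncomputable def g1S (κ : ℝ) (c : ℂ) (z : ℂ) : ℂ := ∑' n : ℕ, ((n:ℂ)+1) * Bc κ c n * z^n
noncomputable def g2S (κ : ℝ) (c : ℂ) (z : ℂ) : ℂ :=
  ∑' n : ℕ, ((n:ℂ)+1) * Bc κ c n * ((n:ℂ) * z^(n-1))
noncomputable def u1S (κ : ℝ) (c : ℂ) (n : ℕ) : ℝ := ((n:ℝ)+1) * ‖Bc κ c n‖
noncomputable def u2S (κ : ℝ) (c : ℂ) (n : ℕ) : ℝ := ((n:ℝ)+1) * ‖Bc κ c n‖ * n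

lemma hgeo : Summable (fun n : ℕ => (1/5:ℝ)^(n+1)) :=
  (summable_nat_add_iff 1).mpr (summable_geometric_of_lt_one (by norm_num) (by norm_num))

lemma hgeo_sum : ∑' n : ℕ, (1/5:ℝ)^(n+1) = 1/4 := by
  have h5 : ∑' n : ℕ, (1/5:ℝ)^(n+1) = ∑' n : ℕ, (1/5:ℝ) * (1/5:ℝ)^n := by
    congr 1; funext n; rw [pow_succ]; ring
  rw [h5, tsum_mul_left, tsum_geometric_of_lt_one (by norm_num) (by norm_num)]
  norm_num

lemma hnorm_n1 (n : ℕ) : ‖((n:ℂ)+1)‖ = (n:ℝ)+1 := by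
  rw [show ((n:ℂ)+1) = ((n+1:ℕ):ℂ) by push_cast; ring, Complex.norm_natCast]
  push_cast; ring

section bounds
variable {κ : ℝ} {c : ℂ} (hκpos : 0 < κ) (hc : c ≠ 0) (hq : ‖c‖ ≤ 0.85 * κ)
include hκpos hc hq

lemma hu2le (n : ℕ) : u2S κ c (n+1) ≤ (1/5:ℝ)^(n+1) := by
  have := KB hκpos hc hq n
  unfold u2S
  push_cast
  nlinarith [norm_nonneg (Bc κ c (n+1))]

lemma hu1le (n : ℕ) : u1S κ c (n+1) ≤ (1/5:ℝ)^(n+1) := by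
  have := KB hκpos hc hq n
  unfold u1S
  push_cast
  nlinarith [norm_nonneg (Bc κ c (n+1)), mul_nonneg (mul_nonneg
    (by positivity : (0:ℝ) ≤ (n:ℝ)+2) (norm_nonneg (Bc κ c (n+1)))) (Nat.cast_nonneg (α := ℝ) n)]

lemma hSu2 : Summable (u2S κ c) := by
  apply (summable_nat_add_iff 1).mp
  exact Summable.of_nonneg_of_le (fun n => by unfold u2S; positivity) (hu2le hκpos hc hq) hgeo

lemma hSu1 : Summable (u1S κ c) := by
  apply (summable_nat_add_iff 1).mp
  exact Summable.of_nonneg_of_le (fun n => by unfold u1S; positivity) (hu1le hκpos hc hq) hgeo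

end bounds

lemma hterm1 (κ : ℝ) (c : ℂ) (n : ℕ) (y : ℂ) :
    HasDerivAt (fun z : ℂ => Bc κ c n * z^(n+1)) (((n:ℂ)+1) * Bc κ c n * y^n) y := by
  have h0 := (hasDerivAt_pow (n+1) y).const_mul (Bc κ c n)
  simp only [Nat.add_sub_cancel] at h0
  rw [show ((n:ℂ)+1) * Bc κ c n * y^n = Bc κ c n * (((n+1:ℕ):ℂ) * y^n) by push_cast; ring]
  exact h0

lemma hterm2 (κ : ℝ) (c : ℂ) (n : ℕ) (y : ℂ) :
    HasDerivAt (fun z : ℂ => ((n:ℂ)+1) * Bc κ c n * z^n)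
      (((n:ℂ)+1) * Bc κ c n * ((n:ℂ) * y^(n-1))) y :=
  (hasDerivAt_pow n y).const_mul _

lemma hb1 (κ : ℝ) (c : ℂ) (n : ℕ) : ∀ y ∈ Metric.ball (0:ℂ) 1,
    ‖((n:ℂ)+1) * Bc κ c n * y^n‖ ≤ u1S κ c n := by
  intro y hy
  have hy1 : ‖y‖ ≤ 1 := le_of_lt (mem_ball_zero_iff.mp hy)
  rw [norm_mul, norm_mul, norm_pow, hnorm_n1]
  have h1 : ‖y‖^n ≤ 1 := pow_le_one₀ (norm_nonneg y) hy1
  unfold u1S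
  nlinarith [mul_le_mul_of_nonneg_left h1
    (show (0:ℝ) ≤ ((n:ℝ)+1)*‖Bc κ c n‖ by positivity)]

lemma hb2 (κ : ℝ) (c : ℂ) (n : ℕ) : ∀ y ∈ Metric.ball (0:ℂ) 1,
    ‖((n:ℂ)+1) * Bc κ c n * ((n:ℂ) * y^(n-1))‖ ≤ u2S κ c n := by
  intro y hy
  have hy1 : ‖y‖ ≤ 1 := le_of_lt (mem_ball_zero_iff.mp hy)
  rw [norm_mul, norm_mul, norm_mul, norm_pow, hnorm_n1, Complex.norm_natCast]
  have h1 : ‖y‖^(n-1) ≤ 1 := pow_le_one₀ (norm_nonneg y) hy1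
  unfold u2S
  nlinarith [mul_le_mul_of_nonneg_left (mul_le_mul_of_nonneg_left h1
    (Nat.cast_nonneg (α := ℝ) n)) (show (0:ℝ) ≤ ((n:ℝ)+1)*‖Bc κ c n‖ by positivity)]

section derivs
variable {κ : ℝ} {c : ℂ} (hκpos : 0 < κ) (hc : c ≠ 0) (hq : ‖c‖ ≤ 0.85 * κ)
include hκpos hc hq

lemma HD1 : ∀ z ∈ Metric.ball (0:ℂ) 1, HasDerivAt (gS κ c) (g1S κ c z) z := by
  intro z hz
  have hg0sum : Summable (fun n : ℕ => Bc κ c n * (0:ℂ)^(n+1)) := by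
    have he : (fun n : ℕ => Bc κ c n * (0:ℂ)^(n+1)) = fun _ => 0 := by
      funext n; simp
    rw [he]; exact summable_zero
  exact hasDerivAt_tsum_of_isPreconnected (hSu1 hκpos hc hq) isOpen_ball
    (convex_ball (0:ℂ) 1).isPreconnected (fun n y _ => hterm1 κ c n y) (hb1 κ c)
    (mem_ball_self one_pos) hg0sum hz

lemma HD2 : ∀ z ∈ Metric.ball (0:ℂ) 1, HasDerivAt (g1S κ c) (g2S κ c z) z := by
  intro z hz
  have hg10sum : Summable (fun n : ℕ => ((n:ℂ)+1) * Bc κ c n * (0:ℂ)^n) :=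
    Summable.of_norm_bounded (hSu1 hκpos hc hq) (fun n => hb1 κ c n 0 (mem_ball_self one_pos))
  exact hasDerivAt_tsum_of_isPreconnected (hSu2 hκpos hc hq) isOpen_ball
    (convex_ball (0:ℂ) 1).isPreconnected (fun n y _ => hterm2 κ c n y) (hb2 κ c)
    (mem_ball_self one_pos) hg10sum hz

end derivs

section values
variable {κ : ℝ} {c : ℂ} (hκpos : 0 < κ) (hc : c ≠ 0) (hq : ‖c‖ ≤ 0.85 * κ)
include hκpos hc hq

lemma KB' (n : ℕ) : ‖Bc κ c (n+1)‖ ≤ (1/5:ℝ)^(n+1) := by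
  have h := KB hκpos hc hq n
  nlinarith [norm_nonneg (Bc κ c (n+1)),
    mul_nonneg (Nat.cast_nonneg (α := ℝ) n) (norm_nonneg (Bc κ c (n+1))),
    mul_nonneg (mul_nonneg (Nat.cast_nonneg (α := ℝ) n) (Nat.cast_nonneg (α := ℝ) n))
      (norm_nonneg (Bc κ c (n+1)))]

omit hc hq in
lemma norm_Bc (m : ℕ) : ‖Bc κ c m‖ = 6*κ/‖c‖ * ‖bc κ c (m+1)‖ := by
  unfold Bc
  rw [norm_mul, norm_neg, norm_div, norm_mul, Complex.norm_real, Real.norm_eq_abs,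
    abs_of_pos hκpos]
  norm_num

lemma sum_bc : Summable (fun n : ℕ => ‖bc κ c n‖) := by
  have ht : 0 < ‖c‖ := norm_pos_iff.mpr hc
  apply (summable_nat_add_iff 2).mp
  have hrel : ∀ n : ℕ, ‖bc κ c (n+2)‖ = ‖c‖/(6*κ) * ‖Bc κ c (n+1)‖ := by
    intro n
    rw [norm_Bc hκpos (n+1), show n+1+1 = n+2 from rfl]
    field_simp
  refine Summable.of_nonneg_of_le (fun n => norm_nonneg _) (fun n => ?_)
    (hgeo.mul_left (‖c‖/(6*κ)))
  rw [hrel n]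
  exact mul_le_mul_of_nonneg_left (KB' hκpos hc hq n) (by positivity)

lemma hEqOn : Set.EqOn (fun z => 6*(κ:ℂ)/c*(1 - struveU (κ:ℂ) c z)) (gS κ c)
    (Metric.ball (0:ℂ) 1) := by
  intro z hz
  have hz1 : ‖z‖ ≤ 1 := le_of_lt (mem_ball_zero_iff.mp hz)
  have hsbc : Summable (fun n : ℕ => bc κ c n * z^n) := by
    apply Summable.of_norm_bounded (sum_bc hκpos hc hq)
    intro n
    rw [norm_mul, norm_pow]
    calc ‖bc κ c n‖ * ‖z‖^n ≤ ‖bc κ c n‖ * 1 :=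
          mul_le_mul_of_nonneg_left (pow_le_one₀ (norm_nonneg z) hz1) (norm_nonneg _)
      _ = ‖bc κ c n‖ := mul_one _
  have hstru : struveU (κ:ℂ) c z = ∑' n : ℕ, bc κ c n * z^n := rfl
  show 6*(κ:ℂ)/c*(1 - struveU (κ:ℂ) c z) = gS κ c z
  rw [hstru, Summable.tsum_eq_zero_add hsbc, bc_zero]
  unfold gS
  rw [show (∑' n:ℕ, Bc κ c n * z^(n+1))
      = ∑' n:ℕ, (6*(κ:ℂ)/c) * (-(bc κ c (n+1) * z^(n+1))) from
    tsum_congr (fun n => by unfold Bc; ring)]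
  rw [tsum_mul_left, tsum_neg]
  ring

lemma hg1sub : ∀ z ∈ Metric.ball (0:ℂ) 1, ‖g1S κ c z - 1‖ ≤ 1/4 := by
  intro z hz
  have hsumm : Summable (fun n : ℕ => ((n:ℂ)+1) * Bc κ c n * z^n) :=
    Summable.of_norm_bounded (hSu1 hκpos hc hq) (fun n => hb1 κ c n z hz)
  have hexp : g1S κ c z
      = 1 + ∑' n : ℕ, (((n+1:ℕ):ℂ)+1) * Bc κ c (n+1) * z^(n+1) := by
    unfold g1S
    rw [Summable.tsum_eq_zero_add hsumm]
    congr 1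
    simp [Bc_zero hκpos hc]
  rw [hexp, add_sub_cancel_left]
  have hbd : ∀ n : ℕ, ‖(((n+1:ℕ):ℂ)+1) * Bc κ c (n+1) * z^(n+1)‖ ≤ (1/5:ℝ)^(n+1) :=
    fun n => le_trans (hb1 κ c (n+1) z hz) (hu1le hκpos hc hq n)
  have hsn : Summable (fun n : ℕ => ‖(((n+1:ℕ):ℂ)+1) * Bc κ c (n+1) * z^(n+1)‖) :=
    Summable.of_nonneg_of_le (fun n => norm_nonneg _) hbd hgeo
  calc ‖∑' n : ℕ, (((n+1:ℕ):ℂ)+1) * Bc κ c (n+1) * z^(n+1)‖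
      ≤ ∑' n : ℕ, ‖(((n+1:ℕ):ℂ)+1) * Bc κ c (n+1) * z^(n+1)‖ := norm_tsum_le_tsum_norm hsn
    _ ≤ ∑' n : ℕ, (1/5:ℝ)^(n+1) := Summable.tsum_le_tsum hbd hsn hgeo
    _ = 1/4 := hgeo_sum

lemma hg2bd : ∀ z ∈ Metric.ball (0:ℂ) 1, ‖g2S κ c z‖ ≤ 1/4 := by
  intro z hz
  have hsumm : Summable (fun n : ℕ => ((n:ℂ)+1) * Bc κ c n * ((n:ℂ) * z^(n-1))) :=
    Summable.of_norm_bounded (hSu2 hκpos hc hq) (fun n => hb2 κ c n z hz)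
  have hexp : g2S κ c z
      = ∑' n : ℕ, (((n+1:ℕ):ℂ)+1) * Bc κ c (n+1) * (((n+1:ℕ):ℂ) * z^(n+1-1)) := by
    unfold g2S
    rw [Summable.tsum_eq_zero_add hsumm]
    simp
  rw [hexp]
  have hbd : ∀ n : ℕ, ‖(((n+1:ℕ):ℂ)+1) * Bc κ c (n+1) * (((n+1:ℕ):ℂ) * z^(n+1-1))‖
      ≤ (1/5:ℝ)^(n+1) :=
    fun n => le_trans (hb2 κ c (n+1) z hz) (hu2le hκpos hc hq n)
  have hsn : Summable
      (fun n : ℕ => ‖(((n+1:ℕ):ℂ)+1) * Bc κ c (n+1) * (((n+1:ℕ):ℂ) * z^(n+1-1))‖) :=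
    Summable.of_nonneg_of_le (fun n => norm_nonneg _) hbd hgeo
  calc ‖∑' n : ℕ, (((n+1:ℕ):ℂ)+1) * Bc κ c (n+1) * (((n+1:ℕ):ℂ) * z^(n+1-1))‖
      ≤ ∑' n : ℕ, ‖(((n+1:ℕ):ℂ)+1) * Bc κ c (n+1) * (((n+1:ℕ):ℂ) * z^(n+1-1))‖ :=
        norm_tsum_le_tsum_norm hsn
    _ ≤ ∑' n : ℕ, (1/5:ℝ)^(n+1) := Summable.tsum_le_tsum hbd hsn hgeo
    _ = 1/4 := hgeo_sum

lemma hg1lb : ∀ z ∈ Metric.ball (0:ℂ) 1, (3/4:ℝ) ≤ ‖g1S κ c z‖ := by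
  intro z hz
  have h1 := hg1sub hκpos hc hq z hz
  have h2 : ‖(1:ℂ)‖ - ‖g1S κ c z‖ ≤ ‖1 - g1S κ c z‖ := norm_sub_norm_le 1 _
  rw [norm_one, norm_sub_rev] at h2
  linarith

lemma hg1ne : ∀ z ∈ Metric.ball (0:ℂ) 1, g1S κ c z ≠ 0 := by
  intro z hz h0
  have := hg1lb hκpos hc hq z hz
  rw [h0, norm_zero] at this
  linarith

omit hq in
lemma hg10 : g1S κ c 0 = 1 := by
  unfold g1S
  rw [tsum_eq_single 0 (fun b hb => by simp [zero_pow hb])]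
  simp [Bc_zero hκpos hc]

end values

lemma hg00 (κ : ℝ) (c : ℂ) : gS κ c 0 = 0 := by
  unfold gS
  rw [show (fun n:ℕ => Bc κ c n * (0:ℂ)^(n+1)) = fun _ => 0 from funext fun n => by simp,
    tsum_zero]

section anal
variable {κ : ℝ} {c : ℂ} (hκpos : 0 < κ) (hc : c ≠ 0) (hq : ‖c‖ ≤ 0.85 * κ)
include hκpos hc hq

lemma hganal : AnalyticOnNhd ℂ (gS κ c) (Metric.ball (0:ℂ) 1) :=
  DifferentiableOn.analyticOnNhd
    (fun z hz => ((HD1 hκpos hc hq z hz).differentiableAt).differentiableWithinAt) isOpen_ball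

lemma hg1anal : AnalyticOnNhd ℂ (g1S κ c) (Metric.ball (0:ℂ) 1) :=
  DifferentiableOn.analyticOnNhd
    (fun z hz => ((HD2 hκpos hc hq z hz).differentiableAt).differentiableWithinAt) isOpen_ball

end anal


set_option maxHeartbeats 2000000 in
theorem struve_exponential_convex (κ : ℝ) (hκ : ∀ n : ℕ, κ ≠ -(n : ℝ))
    (c : ℂ) (hc : c ≠ 0)
    (h : 2 * κ / Real.exp 1 * (4 * Real.sin 1 + 3 - Real.exp 1) ≥
      (Real.exp 1 + 1) * ‖c‖ + 4 * (Real.exp 1 - 1) ^ 3 +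
        6 * (Real.exp 1 - 1) ^ 2 + 6 / Real.exp 1 - 12 / (Real.exp 1) ^ 2) :
    memKe (fun z => 6 * (κ : ℂ) / c * (1 - struveU (κ : ℂ) c z)) := by
  classical
  set e := Real.exp 1 with hedef
  have hepos : (0:ℝ) < e := Real.exp_pos 1
  have hE1 : e < 2.7182818286 := Real.exp_one_lt_d9
  have hE2 : 2.7182818283 < e := Real.exp_one_gt_d9
  have hs0 : 0 ≤ Real.sin 1 :=
    Real.sin_nonneg_of_nonneg_of_le_pi zero_le_one (by linarith [Real.pi_gt_three])
  have hs1 : Real.sin 1 ≤ 1 := Real.sin_le_one 1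
  set t := ‖c‖ with htdef
  have ht : 0 < t := norm_pos_iff.mpr hc
  have h6 : 0 ≤ 6/e - 12/e^2 := by
    have he2 : 6/e - 12/e^2 = (6*e-12)/e^2 := by field_simp
    rw [he2]; apply div_nonneg (by nlinarith) (by positivity)
  have hcube : 0 ≤ 4*(e-1)^3 := by nlinarith
  have hsq : 0 ≤ 6*(e-1)^2 := by nlinarith
  have hA : (e+1)*t ≤ 2*κ/e*(4*Real.sin 1+3-e) := by linarith [h]
  have hb : 0 < 4*Real.sin 1+3-e := by nlinarith
  have hκpos : 0 < κ := by
    by_contra hcon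
    push_neg at hcon
    have hle : 2*κ/e ≤ 0 := div_nonpos_of_nonpos_of_nonneg (by linarith) hepos.le
    nlinarith [mul_nonpos_of_nonpos_of_nonneg hle hb.le,
      mul_pos (by linarith : (0:ℝ) < e+1) ht]
  have hB' : e*((e+1)*t) ≤ 2*κ*(7-e) := by
    have hmono : 2*κ/e*(4*Real.sin 1+3-e) ≤ 2*κ/e*(7-e) :=
      mul_le_mul_of_nonneg_left (by linarith) (by positivity)
    have hcalc : 2*κ/e*(7-e)*e = 2*κ*(7-e) := by field_simp
    nlinarith [mul_le_mul_of_nonneg_right (le_trans hA hmono) hepos.le]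
  have hq : t ≤ 0.85*κ := by
    have hee : 14 - 2*e ≤ 0.85*(e*(e+1)) := by nlinarith [sq_nonneg (e - 2.7182818283)]
    nlinarith [mul_pos hepos (by linarith : (0:ℝ) < e+1),
      mul_le_mul_of_nonneg_left hee hκpos.le, hB']
  -- now the analytic part
  have hEq := hEqOn hκpos hc hq
  have hgan := hganal hκpos hc hq
  have hg1an := hg1anal hκpos hc hq
  have hg1d : ∀ z ∈ Metric.ball (0:ℂ) 1, deriv (gS κ c) z = g1S κ c z :=
    fun z hz => (HD1 hκpos hc hq z hz).deriv
  have hg2d : ∀ z ∈ Metric.ball (0:ℂ) 1, deriv (g1S κ c) z = g2S κ c z :=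
    fun z hz => (HD2 hκpos hc hq z hz).deriv
  set f₀ : ℂ → ℂ := fun z => 6 * (κ : ℂ) / c * (1 - struveU (κ : ℂ) c z) with hf₀def
  have h0mem : (0:ℂ) ∈ Metric.ball (0:ℂ) 1 := mem_ball_self one_pos
  have hdf : ∀ z ∈ Metric.ball (0:ℂ) 1, deriv f₀ z = g1S κ c z := by
    intro z hz
    have h1 : f₀ =ᶠ[nhds z] gS κ c :=
      Filter.eventuallyEq_of_mem (isOpen_ball.mem_nhds hz) hEq
    rw [h1.deriv_eq]
    exact hg1d z hz
  have hddf : ∀ z ∈ Metric.ball (0:ℂ) 1, deriv (deriv f₀) z = deriv (g1S κ c) z := by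
    intro z hz
    have h1 : deriv f₀ =ᶠ[nhds z] g1S κ c :=
      Filter.eventuallyEq_of_mem (isOpen_ball.mem_nhds hz) (fun y hy => hdf y hy)
    exact h1.deriv_eq
  have hne : ∀ z ∈ Metric.ball (0:ℂ) 1, deriv f₀ z ≠ 0 := by
    intro z hz
    rw [hdf z hz]
    exact hg1ne hκpos hc hq z hz
  refine ⟨?_, ?_, ?_, hne, ?_, ?_, ?_⟩
  · exact AnalyticOnNhd.congr isOpen_ball hgan (fun z hz => (hEq hz).symm)
  · rw [show f₀ 0 = gS κ c 0 from hEq h0mem]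
    exact hg00 κ c
  · rw [hdf 0 h0mem]
    exact hg10 hκpos hc
  · -- analyticity of 1 + z g2/g1
    have hΦ : AnalyticOnNhd ℂ (fun z => 1 + z * (deriv (g1S κ c) z) / g1S κ c z)
        (Metric.ball (0:ℂ) 1) :=
      analyticOnNhd_const.add ((analyticOnNhd_id.mul
        (hg1an.deriv_of_isOpen isOpen_ball)).div hg1an (hg1ne hκpos hc hq))
    refine AnalyticOnNhd.congr isOpen_ball hΦ (fun z hz => ?_)
    show 1 + z * deriv (g1S κ c) z / g1S κ c z
        = 1 + z * deriv (deriv f₀) z / deriv f₀ z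
    rw [hdf z hz, hddf z hz]
  · show (1:ℂ) + 0 * deriv (deriv f₀) 0 / deriv f₀ 0 = 1
    rw [zero_mul, zero_div, add_zero]
  · intro z hz
    have hz1 : ‖z‖ ≤ 1 := le_of_lt (mem_ball_zero_iff.mp hz)
    have h2b := hg2bd hκpos hc hq z hz
    have h1b := hg1lb hκpos hc hq z hz
    show (1:ℂ) + z * deriv (deriv f₀) z / deriv f₀ z ∈ Complex.exp '' Metric.ball 0 1
    have hpz : (1:ℂ) + z * deriv (deriv f₀) z / deriv f₀ z
        = 1 + z * g2S κ c z / g1S κ c z := by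
      rw [hdf z hz, hddf z hz, hg2d z hz]
    rw [hpz]
    have hub : ‖z * g2S κ c z / g1S κ c z‖ ≤ 1/3 := by
      rw [norm_div, norm_mul]
      rw [div_le_iff₀ (by linarith : (0:ℝ) < ‖g1S κ c z‖)]
      nlinarith [norm_nonneg (g2S κ c z), norm_nonneg z]
    have hne0 : (1:ℂ) + z * g2S κ c z / g1S κ c z ≠ 0 := by
      intro h0
      have h3 : ‖(1:ℂ)‖ - ‖z * g2S κ c z / g1S κ c z‖
          ≤ ‖1 - -(z * g2S κ c z / g1S κ c z)‖ := by
        simpa using norm_sub_norm_le (1:ℂ) (-(z * g2S κ c z / g1S κ c z))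
      rw [sub_neg_eq_add, h0, norm_zero, norm_one] at h3
      linarith
    refine ⟨Complex.log (1 + z * g2S κ c z / g1S κ c z), ?_, ?_⟩
    · rw [mem_ball_zero_iff]
      have hlog := Complex.norm_log_one_add_half_le_self
        (z := z * g2S κ c z / g1S κ c z) (by linarith)
      calc ‖Complex.log (1 + z * g2S κ c z / g1S κ c z)‖
          ≤ 3/2 * ‖z * g2S κ c z / g1S κ c z‖ := hlog
        _ ≤ 3/2 * (1/3) := by linarith
        _ < 1 := by norm_num
    · exact Complex.exp_log hne0
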